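/- For nonnegative integers q and j with j ≤ q, the alternating sum H₂(q,j) = Σ_{p=0}^{q-j} (-1)^p (2q-p+1)! / (p! · (q-p+j+2)! · (q-p-j)!) vanishes for 0 ≤ j < q and equals 1/(2q+2) when j = q. -/

import Mathlib

open Finset

-- iterated forward difference of x ↦ C(m - x, r)
lemma fd_claim (m n : ℕ) (hn : 1 ≤ n) (hnm : n < m) :
    ∀ k, k ≤ n - 1 → ∀ y, y + k ≤ m →
      (fwdDiff 1)^[k] (fun x : ℕ => ((m - x).choose (n-1) : ℚ)) y
        = (-1)^k * ((m - y - k).choose (n - 1 - k)) := by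
  intro k
  induction k with
  | zero => intro _ y _; simp
  | succ k ih =>
    intro hk y hy
    rw [Function.iterate_succ_apply', fwdDiff]
    rw [ih (by omega) (y+1) (by omega), ih (by omega) y (by omega)]
    have h1 : m - y - k = (m - y - (k+1)) + 1 := by omega
    have h2 : n - 1 - k = (n - 1 - (k+1)) + 1 := by omega
    have h3 : m - (y+1) - k = m - y - (k+1) := by omega
    rw [h1, h2, h3, Nat.choose_succ_succ]
    push_cast
    ring

lemma alt_sum (m n : ℕ) (hn : 1 ≤ n) (hnm : n < m) :
    ∑ p ∈ range (n+1), (-1:ℚ)^p * (n.choose p) * ((m-p).choose (n-1)) = 0 := by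
  have key : (fwdDiff 1)^[n] (fun x : ℕ => ((m - x).choose (n-1) : ℚ)) 0 = 0 := by
    have hn' : n = (n-1) + 1 := by omega
    rw [hn', Function.iterate_succ_apply', fwdDiff]
    rw [show (n - 1 + 1 - 1) = n - 1 from by omega, show ((0:ℕ)+1) = 1 from rfl]
    rw [fd_claim m n hn hnm (n-1) le_rfl 1 (by omega),
        fd_claim m n hn hnm (n-1) le_rfl 0 (by omega)]
    simp [Nat.sub_self]
  have := fwdDiff_iter_eq_sum_shift (1:ℕ) (fun x : ℕ => ((m - x).choose (n-1) : ℚ)) n 0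
  rw [key] at this
  have h2 : ∑ p ∈ range (n+1), (-1:ℚ)^p * (n.choose p) * ((m-p).choose (n-1))
      = (-1:ℚ)^n * ∑ k ∈ range (n + 1),
        ((-1 : ℤ) ^ (n - k) * n.choose k) • ((m - (0 + k • 1)).choose (n-1) : ℚ) := by
    rw [Finset.mul_sum]
    refine Finset.sum_congr rfl fun k hk => ?_
    simp only [mem_range] at hk
    have hkn : k ≤ n := by omega
    have : (-1:ℚ)^n = (-1)^(n-k) * (-1)^k := by
      rw [← pow_add]; congr 1; omega
    simp only [zsmul_eq_mul, smul_eq_mul, zero_add, smul_eq_mul, mul_one]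
    push_cast
    rw [this]
    have h4 : (-1:ℚ)^(n-k) * (-1:ℚ)^(n-k) = 1 := by
      rw [← pow_add]; exact Even.neg_one_pow ⟨n-k, by ring⟩
    linear_combination (-(-1:ℚ)^k * (n.choose k) * (((m-k).choose (n-1)) : ℚ)) * h4
  rw [h2, ← this, mul_zero]

theorem H2_chu_vandermonde (q j : ℕ) (hjq : j ≤ q) :
    (j < q →
      (∑ p ∈ Finset.range (q - j + 1),
        (-1 : ℚ) ^ p * (2 * q - p + 1).factorial /
          (p.factorial * (q - p + j + 2).factorial * (q - p - j).factorial)) = 0) ∧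
    (j = q →
      (∑ p ∈ Finset.range (q - j + 1),
        (-1 : ℚ) ^ p * (2 * q - p + 1).factorial /
          (p.factorial * (q - p + j + 2).factorial * (q - p - j).factorial)) =
        1 / (2 * q + 2)) := by
  constructor
  · intro hj
    set n := q - j with hndef
    set m := 2*q + 1 with hmdef
    have hn : 1 ≤ n := by omega
    have hnm : n < m := by omega
    have hterm : ∀ p ∈ Finset.range (n+1),
        (-1 : ℚ) ^ p * (2 * q - p + 1).factorial /
          (p.factorial * (q - p + j + 2).factorial * (q - p - j).factorial)
        = ((-1:ℚ)^p * (n.choose p) * ((m-p).choose (n-1))) / n := by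
      intro p hp
      simp only [Finset.mem_range] at hp
      have hpn : p ≤ n := by omega
      have e1 : 2 * q - p + 1 = m - p := by omega
      have e2 : q - p + j + 2 = q + j + 2 - p := by omega
      have e3 : q - p - j = n - p := by omega
      rw [e1, e2, e3]
      -- ℕ identity
      have N : n.choose p * ((m-p).choose (n-1)) *
          (p.factorial * (q + j + 2 - p).factorial * (n - p).factorial) = n * (m - p).factorial := by
        apply Nat.eq_of_mul_eq_mul_right (Nat.factorial_pos (n-1))
        have A := Nat.choose_mul_factorial_mul_factorial hpn
        have hle : n - 1 ≤ m - p := by omega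
        have B := Nat.choose_mul_factorial_mul_factorial hle
        rw [show (m - p) - (n-1) = q + j + 2 - p from by omega] at B
        calc n.choose p * ((m-p).choose (n-1)) *
              (p.factorial * (q + j + 2 - p).factorial * (n - p).factorial) * (n-1).factorial
            = (n.choose p * p.factorial * (n-p).factorial) *
              ((m-p).choose (n-1) * (n-1).factorial * (q + j + 2 - p).factorial) := by ring
          _ = n.factorial * (m - p).factorial := by rw [A, B]
          _ = (n * (n-1).factorial) * (m-p).factorial := by
              rw [Nat.mul_factorial_pred (by omega)]
          _ = n * (m - p).factorial * (n-1).factorial := by ring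
      have d1 : ((p.factorial : ℚ) * (q + j + 2 - p).factorial * (n - p).factorial) ≠ 0 := by
        positivity
      have d2 : (n : ℚ) ≠ 0 := by positivity
      rw [div_eq_div_iff d1 d2]
      have := congrArg (Nat.cast : ℕ → ℚ) N
      push_cast at this ⊢
      linear_combination (-(-1:ℚ)^p) * this
    rw [Finset.sum_congr rfl hterm, ← Finset.sum_div, alt_sum m n hn hnm, zero_div]
  · intro hj
    subst hj
    rw [Nat.sub_self]
    rw [Finset.sum_range_one]
    have e1 : 2 * j - 0 + 1 = 2*j+1 := by omega
    have e2 : j - 0 + j + 2 = 2*j + 2 := by omega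
    have e3 : j - 0 - j = 0 := by omega
    rw [e1, e2, e3]
    rw [show (2*j+2).factorial = (2*j+2) * (2*j+1).factorial from Nat.factorial_succ _]
    have hf : ((2*j+1).factorial : ℚ) ≠ 0 := by positivity
    field_simp
    push_cast
    ring
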